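/- Any solution of the N-peg puzzle contains at least N² jumps in which a red peg and a blue peg cross for the first time (one 'first cross' for each of the N² red–blue pairs), and these first crosses contribute a total weight increase of exactly 2N². -/

import Mathlib

open scoped Classical

/-- A peg of the puzzle: `Sum.inl i` is the `i`-th blue peg, `Sum.inr i` is
the `i`-th red peg. -/
abbrev Peg (N : ℕ) := Fin N ⊕ Fin N

/-- A solution of the `N`-peg puzzle using `L` moves, recorded by the
position (a hole, numbered `1,…,2N+1`) of each peg at each time `0,…,L`.
Initially the blue pegs occupy holes `1,…,N` and the red pegs holes
`N+2,…,2N+1`; at the end the red pegs occupy the leftmost `N` holes and the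
blue pegs the rightmost `N` holes.  On each move exactly one peg moves, by
`±1` into the adjacent empty hole (a step), or by `±2` over one adjacent peg
into the empty hole (a jump). -/
structure PegSolution (N L : ℕ) where
  pos : ℕ → Peg N → ℤ
  mem_range : ∀ t ≤ L, ∀ p, 1 ≤ pos t p ∧ pos t p ≤ 2 * N + 1
  inj : ∀ t ≤ L, ∀ p q, pos t p = pos t q → p = q
  init_blue : ∀ i : Fin N, pos 0 (Sum.inl i) = (i : ℤ) + 1
  init_red : ∀ i : Fin N, pos 0 (Sum.inr i) = (N : ℤ) + 2 + (i : ℤ)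
  final_blue : ∀ i : Fin N, (N : ℤ) + 2 ≤ pos L (Sum.inl i)
  final_red : ∀ i : Fin N, pos L (Sum.inr i) ≤ (N : ℤ)
  move : ∀ t < L, ∃ mover : Peg N,
    (∀ q, q ≠ mover → pos (t + 1) q = pos t q) ∧
    ((pos (t + 1) mover - pos t mover = 1 ∨ pos (t + 1) mover - pos t mover = -1) ∨
     ((pos (t + 1) mover - pos t mover = 2 ∨ pos (t + 1) mover - pos t mover = -2) ∧
      ∃ mid : Peg N, mid ≠ mover ∧ 2 * pos t mid = pos t mover + pos (t + 1) mover))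

/-- The pair consisting of the blue peg `i` and the red peg `j` crosses on
move `t` (one jumps over the other): their relative order changes between
times `t` and `t + 1`. -/
def CrossesAt {N L : ℕ} (s : PegSolution N L) (i j : Fin N) (t : ℕ) : Prop :=
  (s.pos t (Sum.inl i) - s.pos t (Sum.inr j)) *
    (s.pos (t + 1) (Sum.inl i) - s.pos (t + 1) (Sum.inr j)) < 0

/-- The weight of the position at time `t`: total distance moved right by the
blue pegs plus total distance moved left by the red pegs. -/
def weight {N L : ℕ} (s : PegSolution N L) (t : ℕ) : ℤ :=
  (∑ i : Fin N, (s.pos t (Sum.inl i) - s.pos 0 (Sum.inl i))) +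
  ∑ i : Fin N, (s.pos 0 (Sum.inr i) - s.pos t (Sum.inr i))

/-- Move `t` is a first cross: some red–blue pair crosses on move `t` for the
first time. -/
def IsFirstCross {N L : ℕ} (s : PegSolution N L) (t : ℕ) : Prop :=
  ∃ i j : Fin N, CrossesAt s i j t ∧ ∀ u < t, ¬ CrossesAt s i j u


/-! ### Auxiliary machinery -/

namespace PegProof

variable {N L : ℕ}

/-- Signed gap of pair `(i, j)` at time `t`. -/
def d (s : PegSolution N L) (i j : Fin N) (t : ℕ) : ℤ :=
  s.pos t (Sum.inl i) - s.pos t (Sum.inr j)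

lemma crossesAt_iff (s : PegSolution N L) (i j : Fin N) (t : ℕ) :
    CrossesAt s i j t ↔ d s i j t * d s i j (t + 1) < 0 := Iff.rfl

lemma d_ne_zero (s : PegSolution N L) (i j : Fin N) {t : ℕ} (ht : t ≤ L) :
    d s i j t ≠ 0 := by
  intro h
  have hpq : s.pos t (Sum.inl i) = s.pos t (Sum.inr j) := by
    have := sub_eq_zero.mp h; exact this
  exact absurd (s.inj t ht _ _ hpq) (by simp)

lemma d_zero_neg (s : PegSolution N L) (i j : Fin N) : d s i j 0 < 0 := by
  unfold d
  rw [s.init_blue, s.init_red]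
  have hi : (i : ℤ) < N := by exact_mod_cast i.isLt
  have hj : (0 : ℤ) ≤ (j : ℤ) := by positivity
  linarith

lemma no_cross_neg (s : PegSolution N L) (i j : Fin N) :
    ∀ t ≤ L, (∀ u < t, ¬ CrossesAt s i j u) → d s i j t < 0 := by
  intro t
  induction t with
  | zero => intro _ _; exact d_zero_neg s i j
  | succ u ih =>
    intro ht h
    have hu : d s i j u < 0 := by
      refine ih (le_trans (Nat.le_succ u) ht) ?_
      intro v hv
      exact h v (lt_trans hv (Nat.lt_succ_self u))
    have hnc := h u (Nat.lt_succ_self u)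
    rw [crossesAt_iff] at hnc
    push_neg at hnc
    have hne : d s i j (u + 1) ≠ 0 := d_ne_zero s i j ht
    rcases lt_trichotomy (d s i j (u + 1)) 0 with h1 | h1 | h1
    · exact h1
    · exact absurd h1 hne
    · nlinarith

lemma exists_cross (s : PegSolution N L) (i j : Fin N) :
    ∃ t, t < L ∧ CrossesAt s i j t := by
  by_contra hcon
  push_neg at hcon
  have hneg : d s i j L < 0 := no_cross_neg s i j L le_rfl (fun u hu => hcon u hu)
  have h1 := s.final_blue i
  have h2 := s.final_red j
  unfold d at hneg
  linarith

/-- Structure of a cross that happens while the pair is still in the original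
order: the mover is one of the two pegs, the gap goes from `-1` to `1`, and
the mover jumps by `2` (blue) or `-2` (red). -/
lemma cross_analysis (s : PegSolution N L) (i j : Fin N) {t : ℕ} (htL : t < L)
    (mover : Peg N)
    (h1 : ∀ q, q ≠ mover → s.pos (t + 1) q = s.pos t q)
    (h2 : (s.pos (t + 1) mover - s.pos t mover = 1 ∨
            s.pos (t + 1) mover - s.pos t mover = -1) ∨
          ((s.pos (t + 1) mover - s.pos t mover = 2 ∨
            s.pos (t + 1) mover - s.pos t mover = -2) ∧
           ∃ mid : Peg N, mid ≠ mover ∧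
             2 * s.pos t mid = s.pos t mover + s.pos (t + 1) mover))
    (hc : CrossesAt s i j t) (hn : d s i j t < 0) :
    ((mover = Sum.inl i ∧ s.pos (t + 1) mover - s.pos t mover = 2) ∨
      (mover = Sum.inr j ∧ s.pos (t + 1) mover - s.pos t mover = -2)) ∧
    d s i j t = -1 ∧ d s i j (t + 1) = 1 := by
  rw [crossesAt_iff] at hc
  have hpos : 0 < d s i j (t + 1) := by
    rcases lt_trichotomy (d s i j (t + 1)) 0 with h | h | h
    · nlinarith
    · rw [h] at hc; simp at hc
    · exact h
  have hDelta : s.pos (t + 1) mover - s.pos t mover = 1 ∨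
      s.pos (t + 1) mover - s.pos t mover = -1 ∨
      s.pos (t + 1) mover - s.pos t mover = 2 ∨
      s.pos (t + 1) mover - s.pos t mover = -2 := by
    rcases h2 with (h | h) | ⟨(h | h), _⟩ <;> tauto
  by_cases hbi : mover = Sum.inl i
  · subst hbi
    have hj : s.pos (t + 1) (Sum.inr j) = s.pos t (Sum.inr j) :=
      h1 _ (by simp)
    have ha : d s i j (t + 1) - d s i j t =
        s.pos (t + 1) (Sum.inl i) - s.pos t (Sum.inl i) := by
      unfold d; rw [hj]; ring
    have h2' : s.pos (t + 1) (Sum.inl i) - s.pos t (Sum.inl i) = 2 := by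
      rcases hDelta with h | h | h | h <;> omega
    refine ⟨Or.inl ⟨rfl, h2'⟩, ?_, ?_⟩ <;> omega
  · by_cases hrj : mover = Sum.inr j
    · subst hrj
      have hi : s.pos (t + 1) (Sum.inl i) = s.pos t (Sum.inl i) :=
        h1 _ (by simp)
      have ha : d s i j (t + 1) - d s i j t =
          -(s.pos (t + 1) (Sum.inr j) - s.pos t (Sum.inr j)) := by
        unfold d; rw [hi]; ring
      have h2' : s.pos (t + 1) (Sum.inr j) - s.pos t (Sum.inr j) = -2 := by
        rcases hDelta with h | h | h | h <;> omega
      refine ⟨Or.inr ⟨rfl, h2'⟩, ?_, ?_⟩ <;> omega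
    · exfalso
      have hi : s.pos (t + 1) (Sum.inl i) = s.pos t (Sum.inl i) :=
        h1 _ (fun h => hbi h.symm)
      have hj : s.pos (t + 1) (Sum.inr j) = s.pos t (Sum.inr j) :=
        h1 _ (fun h => hrj h.symm)
      have : d s i j (t + 1) = d s i j t := by unfold d; rw [hi, hj]
      omega

lemma weight_diff (s : PegSolution N L) (t : ℕ) (mover : Peg N)
    (h1 : ∀ q, q ≠ mover → s.pos (t + 1) q = s.pos t q) :
    weight s (t + 1) - weight s t =
      Sum.elim (fun _ => s.pos (t + 1) mover - s.pos t mover)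
        (fun _ => s.pos t mover - s.pos (t + 1) mover) mover := by
  have hw : weight s (t + 1) - weight s t =
      (∑ k : Fin N, (s.pos (t + 1) (Sum.inl k) - s.pos t (Sum.inl k))) +
      ∑ k : Fin N, (s.pos t (Sum.inr k) - s.pos (t + 1) (Sum.inr k)) := by
    unfold weight
    simp only [Finset.sum_sub_distrib]
    ring
  rcases mover with m | m
  · have hblue : (∑ k : Fin N, (s.pos (t + 1) (Sum.inl k) - s.pos t (Sum.inl k))) =
        s.pos (t + 1) (Sum.inl m) - s.pos t (Sum.inl m) := by
      refine Finset.sum_eq_single m ?_ ?_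
      · intro k _ hk
        rw [h1 (Sum.inl k) (by simp [hk])]; ring
      · intro h; exact absurd (Finset.mem_univ m) h
    have hred : (∑ k : Fin N, (s.pos t (Sum.inr k) - s.pos (t + 1) (Sum.inr k))) = 0 := by
      refine Finset.sum_eq_zero ?_
      intro k _
      rw [h1 (Sum.inr k) (by simp)]; ring
    rw [hw, hblue, hred]; simp
  · have hblue : (∑ k : Fin N, (s.pos (t + 1) (Sum.inl k) - s.pos t (Sum.inl k))) = 0 := by
      refine Finset.sum_eq_zero ?_
      intro k _
      rw [h1 (Sum.inl k) (by simp)]; ring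
    have hred : (∑ k : Fin N, (s.pos t (Sum.inr k) - s.pos (t + 1) (Sum.inr k))) =
        s.pos t (Sum.inr m) - s.pos (t + 1) (Sum.inr m) := by
      refine Finset.sum_eq_single m ?_ ?_
      · intro k _ hk
        rw [h1 (Sum.inr k) (by simp [hk])]; ring
      · intro h; exact absurd (Finset.mem_univ m) h
    rw [hw, hblue, hred]; simp

/-- A first-cross move increases the weight by exactly `2`. -/
lemma weight_diff_first_cross (s : PegSolution N L) {t : ℕ} (htL : t < L)
    (hfc : IsFirstCross s t) : weight s (t + 1) - weight s t = 2 := by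
  obtain ⟨i, j, hc, hmin⟩ := hfc
  have hn : d s i j t < 0 := no_cross_neg s i j t htL.le hmin
  obtain ⟨mover, h1, h2⟩ := s.move t htL
  obtain ⟨hcase, _, _⟩ := cross_analysis s i j htL mover h1 h2 hc hn
  rcases hcase with ⟨hm, hΔ⟩ | ⟨hm, hΔ⟩ <;>
    rw [weight_diff s t mover h1] <;> subst hm <;> simp <;> omega

/-- Two pairs crossing on the same move while still in original order coincide. -/
lemma cross_pair_unique (s : PegSolution N L) {t : ℕ} (htL : t < L)
    {i j i' j' : Fin N}
    (hc : CrossesAt s i j t) (hn : d s i j t < 0)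
    (hc' : CrossesAt s i' j' t) (hn' : d s i' j' t < 0) :
    i = i' ∧ j = j' := by
  obtain ⟨mover, h1, h2⟩ := s.move t htL
  obtain ⟨hcase, hdt, _⟩ := cross_analysis s i j htL mover h1 h2 hc hn
  obtain ⟨hcase', hdt', _⟩ := cross_analysis s i' j' htL mover h1 h2 hc' hn'
  unfold d at hdt hdt'
  rcases hcase with ⟨hm, _⟩ | ⟨hm, _⟩ <;> rcases hcase' with ⟨hm', _⟩ | ⟨hm', _⟩
  · rw [hm] at hm'
    have hii : i = i' := Sum.inl.inj hm'
    subst hii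
    have : s.pos t (Sum.inr j) = s.pos t (Sum.inr j') := by omega
    have := s.inj t htL.le _ _ this
    injection this with h
    exact ⟨rfl, h⟩
  · rw [hm] at hm'; exact absurd hm' (by simp)
  · rw [hm] at hm'; exact absurd hm' (by simp)
  · rw [hm] at hm'
    have hjj : j = j' := Sum.inr.inj hm'
    subst hjj
    have : s.pos t (Sum.inl i) = s.pos t (Sum.inl i') := by omega
    have := s.inj t htL.le _ _ this
    injection this with h
    exact ⟨h, rfl⟩

/-- First crossing time of pair `(i, j)`. -/
noncomputable def fct (s : PegSolution N L) (i j : Fin N) : ℕ :=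
  Nat.find (exists_cross s i j)

lemma fct_lt (s : PegSolution N L) (i j : Fin N) : fct s i j < L :=
  (Nat.find_spec (exists_cross s i j)).1

lemma fct_crosses (s : PegSolution N L) (i j : Fin N) :
    CrossesAt s i j (fct s i j) :=
  (Nat.find_spec (exists_cross s i j)).2

lemma fct_min (s : PegSolution N L) (i j : Fin N) :
    ∀ u < fct s i j, ¬ CrossesAt s i j u := by
  intro u hu hcu
  exact Nat.find_min (exists_cross s i j) hu ⟨lt_trans hu (fct_lt s i j), hcu⟩

lemma fct_mem (s : PegSolution N L) (i j : Fin N) :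
    fct s i j ∈ (Finset.range L).filter (IsFirstCross s) := by
  rw [Finset.mem_filter, Finset.mem_range]
  exact ⟨fct_lt s i j, i, j, fct_crosses s i j, fct_min s i j⟩

lemma card_eq (s : PegSolution N L) :
    ((Finset.range L).filter (IsFirstCross s)).card = N ^ 2 := by
  have hle : ((Finset.range L).filter (IsFirstCross s)).card ≤
      (Finset.univ : Finset (Fin N × Fin N)).card := by
    refine Finset.card_le_card_of_surjOn (fun p => fct s p.1 p.2) ?_
    intro t ht
    simp only [Finset.coe_filter, Set.mem_setOf_eq, Finset.mem_range] at ht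
    obtain ⟨htL, i, j, hc, hmin⟩ := ht
    refine ⟨(i, j), by simp, ?_⟩
    have h1 : fct s i j ≤ t := Nat.find_min' (exists_cross s i j) ⟨htL, hc⟩
    rcases lt_or_eq_of_le h1 with h | h
    · exact absurd (fct_crosses s i j) (hmin _ h)
    · exact h
  have hge : (Finset.univ : Finset (Fin N × Fin N)).card ≤
      ((Finset.range L).filter (IsFirstCross s)).card := by
    refine Finset.card_le_card_of_injOn (fun p => fct s p.1 p.2)
      (fun p _ => fct_mem s p.1 p.2) ?_
    intro p _ q _ hpq
    simp only at hpq
    have hnp : d s p.1 p.2 (fct s p.1 p.2) < 0 :=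
      no_cross_neg s p.1 p.2 _ (fct_lt s p.1 p.2).le (fct_min s p.1 p.2)
    have hnq : d s q.1 q.2 (fct s q.1 q.2) < 0 :=
      no_cross_neg s q.1 q.2 _ (fct_lt s q.1 q.2).le (fct_min s q.1 q.2)
    have hcq : CrossesAt s q.1 q.2 (fct s p.1 p.2) := by
      rw [hpq]; exact fct_crosses s q.1 q.2
    have hnq' : d s q.1 q.2 (fct s p.1 p.2) < 0 := by rw [hpq]; exact hnq
    obtain ⟨h1, h2⟩ := cross_pair_unique s (fct_lt s p.1 p.2)
      (fct_crosses s p.1 p.2) hnp hcq hnq'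
    exact Prod.ext h1 h2
  have huniv : (Finset.univ : Finset (Fin N × Fin N)).card = N ^ 2 := by
    simp [Finset.card_univ, sq]
  omega

end PegProof

/-- Any solution of the `N`-peg puzzle contains at least `N²` moves which are
first crosses (one for each of the `N²` red–blue pairs), and these first
crosses contribute a total weight increase of exactly `2N²`. -/
theorem first_crosses (N L : ℕ) (s : PegSolution N L) :
    N ^ 2 ≤ ((Finset.range L).filter (IsFirstCross s)).card ∧
    (∑ t ∈ (Finset.range L).filter (IsFirstCross s),
        (weight s (t + 1) - weight s t)) = 2 * (N : ℤ) ^ 2 := by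
  have hcard := PegProof.card_eq s
  constructor
  · omega
  · have hsum : (∑ t ∈ (Finset.range L).filter (IsFirstCross s),
        (weight s (t + 1) - weight s t)) =
        ∑ t ∈ (Finset.range L).filter (IsFirstCross s), (2 : ℤ) := by
      refine Finset.sum_congr rfl ?_
      intro t ht
      rw [Finset.mem_filter, Finset.mem_range] at ht
      exact PegProof.weight_diff_first_cross s ht.1 ht.2
    rw [hsum, Finset.sum_const, hcard]
    push_cast [sq]
    ring
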